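/- Let p₀, p₁, p₂ be three affinely independent points in the plane and let P be a finite set of m ≥ 1 points in the open triangle with vertices p₀, p₁, p₂ such that P ∪ {p₀,p₁,p₂} is in general position (no three collinear). Let w₀, w₁, w₂ be integers with 0 ≤ wᵢ < m and w₀+w₁+w₂ > 2m-3. Then there exist at least w₀+w₁+w₂-2m+3 points q ∈ P such that for each i ∈ {0,1,2}, the open triangle with vertices pᵢ, q, p_{i+1} (indices mod 3) contains at most w_{i+2} points of P. -/

import Mathlib

open scoped Classical

lemma collinear_interior_empty {s : Set (ℝ × ℝ)} (hc : Collinear ℝ s) :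
    interior (convexHull ℝ s) = ∅ := by
  by_contra h
  rw [← Set.not_nonempty_iff_eq_empty] at h
  push_neg at h
  rw [interior_convexHull_nonempty_iff_affineSpan_eq_top] at h
  have h2 : vectorSpan ℝ s = ⊤ := by
    rw [← direction_affineSpan, h, AffineSubspace.direction_top]
  rw [Collinear, h2] at hc
  have : Module.rank ℝ (ℝ × ℝ) ≤ 1 := by
    rwa [← rank_top ℝ (ℝ × ℝ)]
  have h3 : Module.rank ℝ (ℝ × ℝ) = 2 := by
    rw [rank_prod', Module.rank_self]
    norm_num
  rw [h3] at this
  norm_num at this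

lemma vertex_not_mem_interior (a x b : ℝ × ℝ) :
    x ∉ interior (convexHull ℝ ({a, x, b} : Set (ℝ × ℝ))) := by
  intro hx
  have hax : ({a, x, b} : Set (ℝ × ℝ)) = insert x {a, b} := by
    ext y; simp only [Set.mem_insert_iff, Set.mem_singleton_iff]; tauto
  have hcol : Collinear ℝ ({a, x, b} : Set (ℝ × ℝ)) := by
    rw [hax]
    by_cases hxa : x = a
    · subst hxa
      have : (insert x {x, b} : Set (ℝ × ℝ)) = {x, b} := by simp
      rw [this]; exact collinear_pair ℝ x b
    -- main case: show x ∈ convexHull {a, b}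
    have hmem : x ∈ convexHull ℝ ({a, b} : Set (ℝ × ℝ)) := by
      have hK : x ∈ interior (convexHull ℝ (insert x ({a, b} : Set (ℝ × ℝ)))) := by
        rwa [hax] at hx
      rw [mem_interior_iff_mem_nhds, Metric.mem_nhds_iff] at hK
      obtain ⟨ε, hε, hball⟩ := hK
      set ε₂ : ℝ := ε / (2 * ‖x - a‖) with hε₂def
      have hna : ‖x - a‖ > 0 := by
        exact norm_pos_iff.mpr (sub_ne_zero.mpr hxa)
      have hε₂ : 0 < ε₂ := by positivity
      set u : ℝ × ℝ := x + ε₂ • (x - a) with hudef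
      have hu : u ∈ convexHull ℝ (insert x ({a, b} : Set (ℝ × ℝ))) := by
        apply hball
        rw [Metric.mem_ball, dist_eq_norm]
        have : u - x = ε₂ • (x - a) := by rw [hudef]; abel
        rw [this, norm_smul, Real.norm_eq_abs, abs_of_pos hε₂, hε₂def]
        rw [div_mul_eq_mul_div, mul_comm]
        rw [div_lt_iff₀ (by positivity)]
        nlinarith
      rw [convexHull_insert (by simp : ({a, b} : Set (ℝ × ℝ)).Nonempty)] at hu
      rw [mem_convexJoin] at hu
      obtain ⟨x', hx', z, hz, hu⟩ := hu
      rw [Set.mem_singleton_iff] at hx'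
      rw [hx'] at hu
      obtain ⟨s, t, hs, ht, hst, hstu⟩ := hu
      set c : ℝ := ε₂ + t with hcdef
      have hc : 0 < c := by positivity
      have key : c • x = ε₂ • a + t • z := by
        have h1 : s • x + t • z = x + ε₂ • (x - a) := by rw [hstu, hudef]
        have hs' : s = 1 - t := by linarith
        rw [hs'] at h1
        rw [hcdef]
        linear_combination (norm := module) -h1
      have hxzrep : x = (ε₂ / c) • a + (t / c) • z := by
        have : x = c⁻¹ • (c • x) := by
          rw [smul_smul, inv_mul_cancel₀ hc.ne', one_smul]
        rw [this, key, smul_add, smul_smul, smul_smul, div_eq_inv_mul, div_eq_inv_mul]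
      rw [hxzrep]
      exact (convex_convexHull ℝ _) (subset_convexHull ℝ _ (by simp)) hz
        (by positivity) (by positivity) (by field_simp; exact hcdef.symm)
    exact collinear_insert_of_mem_affineSpan_pair
      ((convexHull_subset_affineSpan _) hmem)
  rw [collinear_interior_empty hcol] at hx
  exact hx

theorem stmt_8 (p : Fin 3 → ℝ × ℝ) (hp : AffineIndependent ℝ p)
    (P : Finset (ℝ × ℝ)) (m : ℕ) (hm : 1 ≤ m) (hPm : P.card = m)
    (hPin : ∀ q ∈ P, q ∈ interior (convexHull ℝ ({p 0, p 1, p 2} : Set (ℝ × ℝ))))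
    (hgen : ∀ x ∈ (↑P ∪ {p 0, p 1, p 2} : Set (ℝ × ℝ)),
            ∀ y ∈ (↑P ∪ {p 0, p 1, p 2} : Set (ℝ × ℝ)),
            ∀ z ∈ (↑P ∪ {p 0, p 1, p 2} : Set (ℝ × ℝ)),
            x ≠ y → x ≠ z → y ≠ z → ¬ Collinear ℝ ({x, y, z} : Set (ℝ × ℝ)))
    (w : Fin 3 → ℤ) (hw0 : ∀ i, 0 ≤ w i) (hw1 : ∀ i, w i < m)
    (hsum : w 0 + w 1 + w 2 > 2 * m - 3) :
    ∃ Q ⊆ P, w 0 + w 1 + w 2 - 2 * m + 3 ≤ (Q.card : ℤ) ∧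
      ∀ q ∈ Q, ∀ i : Fin 3,
        ((P.filter (fun x =>
            x ∈ interior (convexHull ℝ ({p i, q, p (i + 1)} : Set (ℝ × ℝ))))).card : ℤ)
          ≤ w (i + 2) := by
  set T : Fin 3 → (ℝ × ℝ) → Set (ℝ × ℝ) :=
    fun i q => interior (convexHull ℝ ({p i, q, p (i + 1)} : Set (ℝ × ℝ))) with hT
  set f : Fin 3 → (ℝ × ℝ) → ℕ := fun i q => (P.filter (fun x => x ∈ T i q)).card with hf
  have hnest : ∀ (i : Fin 3) (q q' : ℝ × ℝ), q' ∈ T i q → T i q' ⊆ T i q := by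
    intro i q q' hq'
    apply interior_mono
    apply convexHull_min _ (convex_convexHull ℝ _)
    intro y hy
    rcases hy with rfl | rfl | rfl
    · exact subset_convexHull ℝ _ (by simp)
    · exact interior_subset hq'
    · exact subset_convexHull ℝ _ (by simp)
  have hlt : ∀ (i : Fin 3), ∀ q' ∈ P, ∀ q, q' ∈ T i q → f i q' < f i q := by
    intro i q' hq'P q hq'
    apply Finset.card_lt_card
    constructor
    · intro x hx
      rw [Finset.mem_filter] at hx ⊢
      exact ⟨hx.1, hnest i q q' hq' hx.2⟩
    · intro hsub
      have h1 : q' ∈ P.filter (fun x => x ∈ T i q) :=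
        Finset.mem_filter.mpr ⟨hq'P, hq'⟩
      have h2 := hsub h1
      rw [Finset.mem_filter] at h2
      exact vertex_not_mem_interior (p i) q' (p (i+1)) h2.2
  set Bad : Fin 3 → Finset (ℝ × ℝ) :=
    fun i => P.filter (fun q => w (i + 2) < (f i q : ℤ)) with hBadDef
  have hBadCard : ∀ i : Fin 3, ((Bad i).card : ℤ) ≤ (m : ℤ) - w (i + 2) - 1 := by
    intro i
    by_cases hne : (Bad i).Nonempty
    · obtain ⟨q, hqBad, hqmin⟩ := Finset.exists_min_image (Bad i) (f i) hne
      have hdisj : Disjoint (P.filter (fun x => x ∈ T i q)) (Bad i) := by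
        rw [Finset.disjoint_left]
        intro x hx hxBad
        rw [Finset.mem_filter] at hx
        have h1 := hlt i x hx.1 q hx.2
        have h2 := hqmin x hxBad
        omega
      have hsub : (P.filter (fun x => x ∈ T i q)) ∪ Bad i ⊆ P := by
        apply Finset.union_subset (Finset.filter_subset _ _) (Finset.filter_subset _ _)
      have hcards := Finset.card_le_card hsub
      rw [Finset.card_union_of_disjoint hdisj, hPm] at hcards
      have hq : w (i + 2) < (f i q : ℤ) := (Finset.mem_filter.mp hqBad).2
      have : (f i q : ℤ) + ((Bad i).card : ℤ) ≤ (m : ℤ) := by exact_mod_cast hcards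
      omega
    · rw [Finset.not_nonempty_iff_eq_empty] at hne
      rw [hne]
      have := hw1 (i + 2)
      simp
      omega
  refine ⟨P \ (Bad 0 ∪ Bad 1 ∪ Bad 2), Finset.sdiff_subset, ?_, ?_⟩
  · have h1 : P.card ≤ (P \ (Bad 0 ∪ Bad 1 ∪ Bad 2)).card + (Bad 0 ∪ Bad 1 ∪ Bad 2).card := by
      rw [Finset.card_sdiff_add_card]
      exact Finset.card_le_card Finset.subset_union_left
    have h2 : (Bad 0 ∪ Bad 1 ∪ Bad 2).card ≤ (Bad 0).card + (Bad 1).card + (Bad 2).card :=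
      le_trans (Finset.card_union_le _ _) (by
        have := Finset.card_union_le (Bad 0) (Bad 1); omega)
    have hb0 := hBadCard 0
    have hb1 := hBadCard 1
    have hb2 := hBadCard 2
    have e0 : (0 : Fin 3) + 2 = 2 := rfl
    have e1 : (1 : Fin 3) + 2 = 0 := rfl
    have e2 : (2 : Fin 3) + 2 = 1 := rfl
    rw [e0] at hb0; rw [e1] at hb1; rw [e2] at hb2
    rw [hPm] at h1
    have h1' : (m : ℤ) ≤ ((P \ (Bad 0 ∪ Bad 1 ∪ Bad 2)).card : ℤ)
        + ((Bad 0 ∪ Bad 1 ∪ Bad 2).card : ℤ) := by exact_mod_cast h1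
    have h2' : ((Bad 0 ∪ Bad 1 ∪ Bad 2).card : ℤ)
        ≤ ((Bad 0).card : ℤ) + ((Bad 1).card : ℤ) + ((Bad 2).card : ℤ) := by exact_mod_cast h2
    omega
  · intro q hq i
    rw [Finset.mem_sdiff] at hq
    obtain ⟨hqP, hqn⟩ := hq
    have hqi : q ∉ Bad i := by
      intro hqi
      apply hqn
      simp only [Finset.mem_union]
      fin_cases i
      · exact Or.inl (Or.inl hqi)
      · exact Or.inl (Or.inr hqi)
      · exact Or.inr hqi
    rw [hBadDef] at hqi
    simp only [Finset.mem_filter, not_and, not_lt] at hqi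
    exact hqi hqP
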